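/- Consider a many-to-many classified matching instance: a bipartite graph G = (A ∪ P, E) where each platform p has a family of classes, each a subset of the edges incident to p with a positive integer quota, and each item a has a family of classes, each a subset of the edges incident to a with a positive integer quota. A set M ⊆ E is feasible if for every class (of any item or platform) with quota q, at most q edges of M lie in that class. Suppose that for every edge e = (a, p) ∈ E, the collection of all classes (of a and of p) that contain e can be partitioned into at most Δ + 1 laminar subfamilies. Then for every maximal feasible set M ⊆ E and every feasible set M* ⊆ E, we have |M*| ≤ (Δ + 1)·|M|. -/

import Mathlib

/-- In the many-to-many setting, `M ⊆ E` is feasible if every class of every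
item and every class of every platform (each class being a set of edges with a
quota) contains at most its quota of edges of `M`. -/
def FeasibleMM {α β : Type*} [DecidableEq α] [DecidableEq β]
    (E : Finset (α × β))
    (Ci : α → Finset (Finset (α × β))) (qi : α → Finset (α × β) → ℕ)
    (Cp : β → Finset (Finset (α × β))) (qp : β → Finset (α × β) → ℕ)
    (M : Finset (α × β)) : Prop :=
  M ⊆ E ∧
  (∀ a : α, ∀ C ∈ Ci a, (M ∩ C).card ≤ qi a C) ∧
  (∀ p : β, ∀ C ∈ Cp p, (M ∩ C).card ≤ qp p C)

/-- Many-to-many classified matching: if for every edge `e = (a, p)` the classes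
of `a` and of `p` containing `e` split into at most `Δ + 1` laminar families,
then every maximal feasible set `M` and every feasible set `M*` satisfy
`|M*| ≤ (Δ + 1)·|M|`. -/
theorem stmt_5 {α β : Type*} [DecidableEq α] [DecidableEq β]
    (E : Finset (α × β))
    (Ci : α → Finset (Finset (α × β))) (qi : α → Finset (α × β) → ℕ)
    (Cp : β → Finset (Finset (α × β))) (qp : β → Finset (α × β) → ℕ)
    (hCi : ∀ a : α, ∀ C ∈ Ci a, ∀ e ∈ C, e ∈ E ∧ e.1 = a)
    (hCp : ∀ p : β, ∀ C ∈ Cp p, ∀ e ∈ C, e ∈ E ∧ e.2 = p)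
    (hqi : ∀ a : α, ∀ C ∈ Ci a, 1 ≤ qi a C)
    (hqp : ∀ p : β, ∀ C ∈ Cp p, 1 ≤ qp p C)
    (Δ : ℕ)
    (hlam : ∀ e ∈ E, ∃ idx : Finset (α × β) → ℕ,
      (∀ C : Finset (α × β), (C ∈ Ci e.1 ∨ C ∈ Cp e.2) → e ∈ C → idx C < Δ + 1) ∧
      (∀ X Y : Finset (α × β), (X ∈ Ci e.1 ∨ X ∈ Cp e.2) → (Y ∈ Ci e.1 ∨ Y ∈ Cp e.2) →
        e ∈ X → e ∈ Y → idx X = idx Y → (X ⊆ Y ∨ Y ⊆ X ∨ X ∩ Y = ∅)))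
    (M : Finset (α × β)) (hM : FeasibleMM E Ci qi Cp qp M)
    (hMmax : ∀ e ∈ E, e ∉ M → ¬ FeasibleMM E Ci qi Cp qp (insert e M))
    (Mstar : Finset (α × β)) (hMstar : FeasibleMM E Ci qi Cp qp Mstar) :
    Mstar.card ≤ (Δ + 1) * M.card := by
  classical
  -- abbreviation for the "good blocking class" predicate
  set D : Finset (α × β) := Mstar \ M with hD
  set N : Finset (α × β) := M \ Mstar with hN
  -- For each e ∈ D there is a class containing e that is "tight":
  -- |M* ∩ C| ≤ |M ∩ C| and 1 ≤ |M ∩ C|.  Choose one of maximum cardinality.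
  have hblock : ∀ e : α × β, ∃ B : Finset (α × β),
      e ∈ D →
        (e ∈ B ∧ (B ∈ Ci e.1 ∨ B ∈ Cp e.2) ∧
          (Mstar ∩ B).card ≤ (M ∩ B).card ∧ 1 ≤ (M ∩ B).card) ∧
        (∀ C : Finset (α × β), e ∈ C → (C ∈ Ci e.1 ∨ C ∈ Cp e.2) →
          (Mstar ∩ C).card ≤ (M ∩ C).card → 1 ≤ (M ∩ C).card → C.card ≤ B.card) := by
    intro e
    by_cases he : e ∈ D
    · have heMs : e ∈ Mstar := (Finset.mem_sdiff.1 he).1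
      have heM : e ∉ M := (Finset.mem_sdiff.1 he).2
      have heE : e ∈ E := hMstar.1 heMs
      have hbad := hMmax e heE heM
      have hsub : insert e M ⊆ E := Finset.insert_subset heE hM.1
      -- extract a violated class
      have hviol : ∃ C : Finset (α × β), e ∈ C ∧ (C ∈ Ci e.1 ∨ C ∈ Cp e.2) ∧
          (Mstar ∩ C).card ≤ (M ∩ C).card ∧ 1 ≤ (M ∩ C).card := by
        rw [FeasibleMM, not_and, not_and_or] at hbad
        have hbad2 := hbad hsub
        have key : ∀ (C : Finset (α × β)) (q : ℕ), 1 ≤ q → (M ∩ C).card ≤ q →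
            (Mstar ∩ C).card ≤ q → q < ((insert e M) ∩ C).card →
            e ∈ C ∧ (Mstar ∩ C).card ≤ (M ∩ C).card ∧ 1 ≤ (M ∩ C).card := by
          intro C q hq1 hqM hqMs hlt
          have heC : e ∈ C := by
            by_contra heC
            rw [Finset.insert_inter_of_notMem heC] at hlt
            omega
          rw [Finset.insert_inter_of_mem heC,
            Finset.card_insert_of_notMem (by simp [heM])] at hlt
          exact ⟨heC, by omega, by omega⟩
        rcases hbad2 with h | h
        · push_neg at h
          obtain ⟨a, C, hCa, hlt⟩ := h
          have hk := key C (qi a C) (hqi a C hCa) (hM.2.1 a C hCa) (hMstar.2.1 a C hCa)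
            hlt
          have ha : e.1 = a := (hCi a C hCa e hk.1).2
          exact ⟨C, hk.1, Or.inl (ha ▸ hCa), hk.2.1, hk.2.2⟩
        · push_neg at h
          obtain ⟨p, C, hCp', hlt⟩ := h
          have hk := key C (qp p C) (hqp p C hCp') (hM.2.2 p C hCp') (hMstar.2.2 p C hCp')
            hlt
          have hp : e.2 = p := (hCp p C hCp' e hk.1).2
          exact ⟨C, hk.1, Or.inr (hp ▸ hCp'), hk.2.1, hk.2.2⟩
      -- take a maximum-cardinality such class
      obtain ⟨C0, hC0⟩ := hviol
      set T : Finset (Finset (α × β)) :=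
        (Ci e.1 ∪ Cp e.2).filter (fun C => e ∈ C ∧
          (Mstar ∩ C).card ≤ (M ∩ C).card ∧ 1 ≤ (M ∩ C).card) with hT
      have hC0T : C0 ∈ T := by
        rw [hT, Finset.mem_filter, Finset.mem_union]
        exact ⟨hC0.2.1, hC0.1, hC0.2.2⟩
      obtain ⟨Bm, hBmT, hBmax⟩ := Finset.exists_max_image T Finset.card ⟨C0, hC0T⟩
      rw [hT, Finset.mem_filter, Finset.mem_union] at hBmT
      refine ⟨Bm, fun _ => ⟨⟨hBmT.2.1, hBmT.1, hBmT.2.2⟩, ?_⟩⟩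
      intro C h1 h2 h3 h4
      exact hBmax C (by rw [hT, Finset.mem_filter, Finset.mem_union]; exact ⟨h2, h1, h3, h4⟩)
    · exact ⟨∅, fun h => absurd h he⟩
  choose B hB using hblock
  set 𝓑 : Finset (Finset (α × β)) := D.image B with h𝓑
  -- every class in 𝓑 is a class of each of its member edges
  have hclass : ∀ C ∈ 𝓑, ∀ f ∈ C, f ∈ E ∧ (C ∈ Ci f.1 ∨ C ∈ Cp f.2) := by
    intro C hC f hf
    obtain ⟨e, heD, rfl⟩ := Finset.mem_image.1 hC
    rcases (hB e heD).1.2.1 with h | h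
    · obtain ⟨hfE, hf1⟩ := hCi e.1 _ h f hf
      exact ⟨hfE, Or.inl (hf1 ▸ h)⟩
    · obtain ⟨hfE, hf2⟩ := hCp e.2 _ h f hf
      exact ⟨hfE, Or.inr (hf2 ▸ h)⟩
  -- Step 1 : D.card ≤ ∑_{C ∈ 𝓑} |D ∩ C|
  have step1 : D.card ≤ ∑ C ∈ 𝓑, (D ∩ C).card := by
    have hsub : D ⊆ 𝓑.biUnion (fun C => D ∩ C) := by
      intro e he
      exact Finset.mem_biUnion.2 ⟨B e, Finset.mem_image_of_mem B he,
        Finset.mem_inter.2 ⟨he, (hB e he).1.1⟩⟩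
    exact (Finset.card_le_card hsub).trans (Finset.card_biUnion_le)
  -- Step 2 : |D ∩ C| ≤ |N ∩ C| for C ∈ 𝓑
  have step2 : ∀ C ∈ 𝓑, (D ∩ C).card ≤ (N ∩ C).card := by
    intro C hC
    obtain ⟨e, heD, rfl⟩ := Finset.mem_image.1 hC
    have hle : (Mstar ∩ B e).card ≤ (M ∩ B e).card := (hB e heD).1.2.2.1
    set C := B e
    have e1 : D ∩ C = (Mstar ∩ C) \ M := by
      ext x; simp only [hD, Finset.mem_inter, Finset.mem_sdiff]; tauto
    have e2 : N ∩ C = (M ∩ C) \ Mstar := by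
      ext x; simp only [hN, Finset.mem_inter, Finset.mem_sdiff]; tauto
    have c1 := Finset.card_inter_add_card_sdiff (Mstar ∩ C) M
    have c2 := Finset.card_inter_add_card_sdiff (M ∩ C) Mstar
    have e3 : (Mstar ∩ C ∩ M).card = (M ∩ C ∩ Mstar).card := by
      congr 1; ext x; simp only [Finset.mem_inter]; tauto
    rw [e1, e2]
    omega
  -- Step 3 : double counting
  have step3 : ∑ C ∈ 𝓑, (N ∩ C).card = ∑ f ∈ N, (𝓑.filter (fun C => f ∈ C)).card := by
    calc ∑ C ∈ 𝓑, (N ∩ C).card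
        = ∑ C ∈ 𝓑, ∑ f ∈ N, (if f ∈ C then 1 else 0) := by
          refine Finset.sum_congr rfl fun C _ => ?_
          rw [← Finset.card_filter, Finset.filter_mem_eq_inter]
      _ = ∑ f ∈ N, ∑ C ∈ 𝓑, (if f ∈ C then 1 else 0) := Finset.sum_comm
      _ = ∑ f ∈ N, (𝓑.filter (fun C => f ∈ C)).card := by
          refine Finset.sum_congr rfl fun f _ => ?_
          rw [Finset.card_filter]
  -- Step 4 : every f ∈ N lies in at most Δ+1 classes of 𝓑
  have step4 : ∀ f ∈ N, (𝓑.filter (fun C => f ∈ C)).card ≤ Δ + 1 := by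
    intro f hf
    have hfE : f ∈ E := hM.1 (Finset.mem_sdiff.1 hf).1
    obtain ⟨idx, hidx1, hidx2⟩ := hlam f hfE
    have := Finset.card_le_card_of_injOn idx
      (s := 𝓑.filter (fun C => f ∈ C)) (t := Finset.range (Δ + 1))
      (fun C hC => by
        rw [Finset.mem_coe, Finset.mem_filter] at hC
        exact Finset.mem_range.2 (hidx1 C ((hclass C hC.1 f hC.2).2) hC.2))
      ?_
    · simpa using this
    · intro X hX Y hY hXY
      simp only [Finset.coe_filter, Set.mem_setOf_eq] at hX hY
      have hXf : X ∈ Ci f.1 ∨ X ∈ Cp f.2 := (hclass X hX.1 f hX.2).2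
      have hYf : Y ∈ Ci f.1 ∨ Y ∈ Cp f.2 := (hclass Y hY.1 f hY.2).2
      obtain ⟨e, heD, rfl⟩ := Finset.mem_image.1 hX.1
      obtain ⟨e', heD', hYe⟩ := Finset.mem_image.1 hY.1
      -- a class of e' containing e is a class of e
      have classOf : ∀ (x : α × β) (hx : x ∈ D) (z : α × β), z ∈ B x →
          B x ∈ Ci z.1 ∨ B x ∈ Cp z.2 := by
        intro x hx z hz
        rcases (hB x hx).1.2.1 with h | h
        · exact Or.inl (((hCi x.1 _ h z hz).2) ▸ h)
        · exact Or.inr (((hCp x.2 _ h z hz).2) ▸ h)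
      rcases hidx2 (B e) Y hXf hYf hX.2 hY.2 hXY with hss | hss | hss
      · -- B e ⊆ Y : Y is a tight class containing e, so |Y| ≤ |B e|, hence equal
        subst hYe
        have heY : e ∈ B e' := hss ((hB e heD).1.1)
        have hmax := (hB e heD).2 (B e') heY (classOf e' heD' e heY)
          (hB e' heD').1.2.2.1 (hB e' heD').1.2.2.2
        exact Finset.eq_of_subset_of_card_le hss hmax
      · subst hYe
        have heY : e' ∈ B e := hss ((hB e' heD').1.1)
        have hmax := (hB e' heD').2 (B e) heY (classOf e heD e' heY)
          (hB e heD).1.2.2.1 (hB e heD).1.2.2.2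
        exact (Finset.eq_of_subset_of_card_le hss hmax).symm
      · exact absurd (Finset.mem_inter.2 ⟨hX.2, hY.2⟩) (by rw [hss]; simp)
  -- put everything together
  have key : D.card ≤ (Δ + 1) * N.card := by
    calc D.card ≤ ∑ C ∈ 𝓑, (D ∩ C).card := step1
      _ ≤ ∑ C ∈ 𝓑, (N ∩ C).card := Finset.sum_le_sum step2
      _ = ∑ f ∈ N, (𝓑.filter (fun C => f ∈ C)).card := step3
      _ ≤ ∑ _f ∈ N, (Δ + 1) := Finset.sum_le_sum step4
      _ = (Δ + 1) * N.card := by rw [Finset.sum_const, smul_eq_mul, mul_comm]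
  have c1 : (Mstar ∩ M).card + D.card = Mstar.card := Finset.card_inter_add_card_sdiff Mstar M
  have c2 : (M ∩ Mstar).card + N.card = M.card := Finset.card_inter_add_card_sdiff M Mstar
  have c3 : Mstar ∩ M = M ∩ Mstar := Finset.inter_comm _ _
  rw [c3] at c1
  nlinarith [key, c1, c2]
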